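/- If R is monotone (E ⊆ F implies R(E) ⊆ R(F)) and ν(R(∅)) = 0, then for f = Σ_{j=1}^N a_j χ_{E_j} with a_1 > a_2 > ⋯ > a_N > 0 and the E_j pairwise disjoint measurable sets, setting F_j = E_1 ∪ ⋯ ∪ E_j and F_0 = ∅, we have f*_R(y) = Σ_{j=1}^N a_j χ_{R(F_j) \ R(F_{j-1})}(y) for ν-a.e. y ∈ Y. -/

import Mathlib

open MeasureTheory Set Filter
open scoped ENNReal

/-- The rearrangement of `f` with respect to the set transformation `R`. -/
noncomputable def rearr {X Y : Type*} (R : Set X → Set Y) (f : X → ℝ) (y : Y) : ℝ≥0∞ :=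
  ∫⁻ t in Set.Ioi (0 : ℝ), (R {x | t < |f x|}).indicator (fun _ => (1 : ℝ≥0∞)) y

theorem stmt1 {X Y : Type*} [MeasurableSpace X] [MeasurableSpace Y]
    (μ : Measure X) (ν : Measure Y) (R : Set X → Set Y)
    (hRmono : ∀ E F : Set X, E ⊆ F → R E ⊆ R F) (hR0 : ν (R ∅) = 0)
    (N : ℕ) (a : Fin N → ℝ) (ha : ∀ j, 0 < a j)
    (haanti : ∀ i j : Fin N, i < j → a j < a i)
    (E : Fin N → Set X) (hEmeas : ∀ j, MeasurableSet (E j))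
    (hEdisj : ∀ i j : Fin N, i ≠ j → Disjoint (E i) (E j))
    (F : ℕ → Set X)
    (hF : ∀ m : ℕ, F m = ⋃ (k : Fin N) (_ : (k : ℕ) < m), E k) :
    ∀ᵐ y ∂ν,
      rearr R (fun x => ∑ j, a j * (E j).indicator (fun _ => (1 : ℝ)) x) y
        = ∑ j : Fin N,
            ENNReal.ofReal (a j) *
              (R (F ((j : ℕ) + 1)) \ R (F (j : ℕ))).indicator (fun _ => (1 : ℝ≥0∞)) y := by
  classical
  set f : X → ℝ := fun x => ∑ j, a j * (E j).indicator (fun _ => (1 : ℝ)) x with hfdef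
  have hFmono : ∀ m n : ℕ, m ≤ n → F m ⊆ F n := by
    intro m n hmn x hx
    rw [hF] at hx ⊢
    simp only [mem_iUnion] at hx ⊢
    obtain ⟨k, hk, hxk⟩ := hx
    exact ⟨k, hk.trans_le hmn, hxk⟩
  have hF0 : F 0 = ∅ := by rw [hF]; simp
  have hfE : ∀ (k : Fin N) (x : X), x ∈ E k → f x = a k := by
    intro k x hx
    show ∑ j : Fin N, a j * (E j).indicator (fun _ => (1 : ℝ)) x = a k
    rw [Finset.sum_eq_single k]
    · simp [indicator_of_mem hx]
    · intro j _ hj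
      have hxj : x ∉ E j := fun hxj => Set.disjoint_left.mp (hEdisj j k hj) hxj hx
      simp [indicator_of_notMem hxj]
    · simp
  have hf0 : ∀ x : X, (∀ k, x ∉ E k) → f x = 0 := by
    intro x hx
    show ∑ j : Fin N, a j * (E j).indicator (fun _ => (1 : ℝ)) x = 0
    apply Finset.sum_eq_zero
    intro k _
    simp [indicator_of_notMem (hx k)]
  have hlevel : ∀ t : ℝ, 0 ≤ t →
      {x | t < |f x|} = ⋃ k, ⋃ (_ : t < a k), E k := by
    intro t ht
    ext x
    simp only [mem_setOf_eq, mem_iUnion]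
    constructor
    · intro hx
      by_cases hxE : ∃ k, x ∈ E k
      · obtain ⟨k, hk⟩ := hxE
        rw [hfE k x hk, abs_of_pos (ha k)] at hx
        exact ⟨k, hx, hk⟩
      · push_neg at hxE
        rw [hf0 x hxE] at hx
        simp only [abs_zero] at hx
        linarith
    · rintro ⟨k, hk, hxk⟩
      rw [hfE k x hxk, abs_of_pos (ha k)]
      exact hk
  have hlevelN : ∀ t : ℝ, 0 < t → {x | t < |f x|} ⊆ F N := by
    intro t ht x hx
    rw [hlevel t ht.le] at hx
    simp only [mem_iUnion] at hx
    obtain ⟨k, _, hxk⟩ := hx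
    rw [hF]
    simp only [mem_iUnion]
    exact ⟨k, k.isLt, hxk⟩
  filter_upwards [measure_eq_zero_iff_ae_notMem.mp hR0] with y hy
  show (∫⁻ t in Set.Ioi (0 : ℝ), (R {x | t < |f x|}).indicator (fun _ => (1 : ℝ≥0∞)) y) = _
  by_cases hyN : y ∈ R (F N)
  · -- y is in some R (F m); take the least
    have hex : ∃ m, y ∈ R (F m) := ⟨N, hyN⟩
    set m₀ := Nat.find hex with hm₀
    have hm₀spec : y ∈ R (F m₀) := Nat.find_spec hex
    have hm₀min : ∀ m < m₀, y ∉ R (F m) := fun m hm => Nat.find_min hex hm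
    have hm₀pos : 1 ≤ m₀ := by
      rcases Nat.eq_zero_or_pos m₀ with h0 | h1
      · exfalso; rw [h0, hF0] at hm₀spec; exact hy hm₀spec
      · exact h1
    have hm₀le : m₀ ≤ N := Nat.find_le hyN
    have hjlt : m₀ - 1 < N := by omega
    set j : Fin N := ⟨m₀ - 1, hjlt⟩ with hjdef
    have hj1 : (j : ℕ) + 1 = m₀ := by simp [hjdef]; omega
    -- characterize membership in R of level sets
    have hchar : ∀ t : ℝ, 0 < t → (y ∈ R {x | t < |f x|} ↔ t < a j) := by
      intro t ht
      constructor
      · intro hyt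
        by_contra hta
        push_neg at hta
        have hsub : {x | t < |f x|} ⊆ F (j : ℕ) := by
          intro x hx
          rw [hlevel t ht.le] at hx
          simp only [mem_iUnion] at hx
          obtain ⟨k, hk, hxk⟩ := hx
          have hkj : (k : ℕ) < (j : ℕ) := by
            by_contra hkj
            push_neg at hkj
            have : a k ≤ a j := by
              rcases eq_or_lt_of_le hkj with heq | hlt
              · rw [Fin.ext heq]
              · exact (haanti j k (by exact hlt)).le
            linarith
          rw [hF]
          simp only [mem_iUnion]
          exact ⟨k, hkj, hxk⟩
        have : y ∈ R (F (j : ℕ)) := hRmono _ _ hsub hyt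
        exact hm₀min (j : ℕ) (by omega) this
      · intro hta
        have hsub : F m₀ ⊆ {x | t < |f x|} := by
          intro x hx
          rw [hF] at hx
          simp only [mem_iUnion] at hx
          obtain ⟨k, hk, hxk⟩ := hx
          rw [hlevel t ht.le]
          simp only [mem_iUnion]
          refine ⟨k, ?_, hxk⟩
          have haj : a j ≤ a k := by
            rcases lt_or_eq_of_le (show (k : ℕ) ≤ (j : ℕ) by omega) with hlt | heq
            · exact (haanti k j hlt).le
            · rw [show k = j from Fin.ext heq]
          linarith
        exact hRmono _ _ hsub hm₀spec
    -- RHS reduces to ofReal (a j)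
    have hRHS : (∑ i : Fin N, ENNReal.ofReal (a i) *
        (R (F ((i : ℕ) + 1)) \ R (F (i : ℕ))).indicator (fun _ => (1 : ℝ≥0∞)) y)
        = ENNReal.ofReal (a j) := by
      rw [Finset.sum_eq_single j]
      · have hyin : y ∈ R (F ((j : ℕ) + 1)) \ R (F (j : ℕ)) := by
          constructor
          · rw [hj1]; exact hm₀spec
          · exact hm₀min (j : ℕ) (by omega)
        simp [indicator_of_mem hyin]
      · intro i _ hij
        have : y ∉ R (F ((i : ℕ) + 1)) \ R (F (i : ℕ)) := by
          rcases lt_or_gt_of_ne (Fin.val_ne_of_ne hij) with hlt | hgt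
          · intro hmem
            exact hm₀min ((i : ℕ) + 1) (by omega) hmem.1
          · intro hmem
            exact hmem.2 (hRmono _ _ (hFmono m₀ (i : ℕ) (by omega)) hm₀spec)
        simp [indicator_of_notMem this]
      · simp
    rw [hRHS]
    have hint : ∀ t ∈ Set.Ioi (0 : ℝ),
        (R {x | t < |f x|}).indicator (fun _ => (1 : ℝ≥0∞)) y
          = (Set.Iio (a j)).indicator (fun _ => (1 : ℝ≥0∞)) t := by
      intro t ht
      by_cases hta : t < a j
      · rw [indicator_of_mem ((hchar t ht).mpr hta)]
        simp [Set.indicator, hta]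
      · rw [indicator_of_notMem (fun h => hta ((hchar t ht).mp h))]
        simp [Set.indicator, hta]
    rw [setLIntegral_congr_fun measurableSet_Ioi hint]
    rw [lintegral_indicator measurableSet_Iio]
    rw [Measure.restrict_restrict measurableSet_Iio]
    simp only [lintegral_one, Measure.restrict_apply, MeasurableSet.univ, Set.univ_inter]
    rw [Set.Iio_inter_Ioi, Real.volume_Ioo, sub_zero]
  · -- y not in R (F N): both sides are zero
    have hRHS : (∑ i : Fin N, ENNReal.ofReal (a i) *
        (R (F ((i : ℕ) + 1)) \ R (F (i : ℕ))).indicator (fun _ => (1 : ℝ≥0∞)) y) = 0 := by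
      apply Finset.sum_eq_zero
      intro i _
      have : y ∉ R (F ((i : ℕ) + 1)) \ R (F (i : ℕ)) := by
        intro hmem
        exact hyN (hRmono _ _ (hFmono ((i : ℕ) + 1) N i.isLt) hmem.1)
      simp [indicator_of_notMem this]
    rw [hRHS]
    have hint : ∀ t ∈ Set.Ioi (0 : ℝ),
        (R {x | t < |f x|}).indicator (fun _ => (1 : ℝ≥0∞)) y = 0 := by
      intro t ht
      exact indicator_of_notMem (fun h => hyN (hRmono _ _ (hlevelN t ht) h)) _
    rw [setLIntegral_congr_fun measurableSet_Ioi hint]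
    simp
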